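/- Let 0 < a ≤ b and L > 0. There exists a constant c > 0 depending only on a and b such that for every n ≥ 1 and all real symmetric positive definite n×n matrices R and S with λ_max(R) ≤ L and with every eigenvalue of R⁻¹S contained in [a, b], one has (1/n)·(tr(R⁻¹S) − ln det(R⁻¹S) − n) ≥ (c/L²)·‖R − S‖₂². (This is the lower bound E[𝓛_n(θ) − 𝓛_n(θ₀)] ≳ ‖R_θ − R_{θ₀}‖₂² established in the proof of Theorem 1.) -/

import Mathlib

open scoped Matrix

/-- The normalized Frobenius norm `‖M‖₂ = ((1/n) Σ_{i,j} M_{ij}²)^{1/2}`. -/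
noncomputable def frobNormN (n : ℕ) (M : Matrix (Fin n) (Fin n) ℝ) : ℝ :=
  Real.sqrt ((1 / (n : ℝ)) * ∑ i, ∑ j, M i j ^ 2)

/-- The largest eigenvalue of a symmetric matrix, as the supremum of the Rayleigh quotient
over the unit sphere. -/
noncomputable def lambdaMax {m : ℕ} (A : Matrix (Fin m) (Fin m) ℝ) : ℝ :=
  sSup {r : ℝ | ∃ x : Fin m → ℝ, (∑ i, x i ^ 2) = 1 ∧ r = x ⬝ᵥ A.mulVec x}

/- ### Auxiliary lemmas -/

open scoped MatrixOrder in
/-- square root of a positive semidefinite real matrix. -/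
noncomputable def aux_msqrt {n : ℕ} (P : Matrix (Fin n) (Fin n) ℝ) : Matrix (Fin n) (Fin n) ℝ :=
  CFC.sqrt P

open scoped MatrixOrder in
lemma aux_msqrt_herm {n : ℕ} (P : Matrix (Fin n) (Fin n) ℝ) : (aux_msqrt P)ᴴ = aux_msqrt P :=
  (Matrix.nonneg_iff_posSemidef.mp (CFC.sqrt_nonneg P)).isHermitian

open scoped MatrixOrder in
lemma aux_msqrt_mul_self {n : ℕ} {P : Matrix (Fin n) (Fin n) ℝ} (hP : P.PosSemidef) :
    aux_msqrt P * aux_msqrt P = P :=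
  CFC.sqrt_mul_sqrt_self P hP.nonneg

/-- Scalar inequality: for `0 < x ≤ b`, `(x-1)²/(1+√b)² ≤ x - log x - 1`. -/
lemma aux_scalar_ineq {b x : ℝ} (hx : 0 < x) (hxb : x ≤ b) :
    (x - 1) ^ 2 / (1 + Real.sqrt b) ^ 2 ≤ x - Real.log x - 1 := by
  have hs : 0 < Real.sqrt x := Real.sqrt_pos.mpr hx
  have hlog : Real.log (Real.sqrt x) ≤ Real.sqrt x - 1 := Real.log_le_sub_one_of_pos hs
  have h2 : Real.log x = 2 * Real.log (Real.sqrt x) := by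
    rw [Real.log_sqrt hx.le]; ring
  have hsq : Real.sqrt x ^ 2 = x := Real.sq_sqrt hx.le
  have key : (Real.sqrt x - 1) ^ 2 ≤ x - Real.log x - 1 := by nlinarith
  have hb : Real.sqrt x ≤ Real.sqrt b := Real.sqrt_le_sqrt hxb
  have h1b : (0 : ℝ) < (1 + Real.sqrt b) ^ 2 := by positivity
  rw [div_le_iff₀ h1b]
  have hfact1 : x - 1 = (Real.sqrt x - 1) * (Real.sqrt x + 1) := by linear_combination -hsq
  have hfact : (x - 1) ^ 2 = (Real.sqrt x - 1) ^ 2 * (Real.sqrt x + 1) ^ 2 := by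
    rw [hfact1, mul_pow]
  have hle2 : (Real.sqrt x + 1) ^ 2 ≤ (1 + Real.sqrt b) ^ 2 := by
    nlinarith [Real.sqrt_nonneg x, Real.sqrt_nonneg b]
  have hkey0 : (0 : ℝ) ≤ x - Real.log x - 1 := le_trans (sq_nonneg _) key
  rw [hfact]
  exact mul_le_mul key hle2 (sq_nonneg _) hkey0

/-- The trace of a positive semidefinite real matrix is nonnegative. -/
lemma aux_trace_nonneg {n : ℕ} {M : Matrix (Fin n) (Fin n) ℝ} (hM : M.PosSemidef) :
    0 ≤ M.trace := by
  rw [Matrix.trace]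
  refine Finset.sum_nonneg fun i _ => ?_
  have h := hM.dotProduct_mulVec_nonneg (Pi.single i 1)
  simpa [dotProduct, Matrix.mulVec, Pi.single_apply, Finset.sum_ite_eq,
    Finset.sum_ite_eq'] using h

/-- The trace of the product of two positive semidefinite real matrices is nonnegative. -/
lemma aux_trace_mul_nonneg {n : ℕ} {P Q : Matrix (Fin n) (Fin n) ℝ}
    (hP : P.PosSemidef) (hQ : Q.PosSemidef) : 0 ≤ (P * Q).trace := by
  set T := aux_msqrt P with hTdef
  have hTH : Tᴴ = T := aux_msqrt_herm P
  have hTT : T * T = P := aux_msqrt_mul_self hP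
  have hconj : (Tᴴ * Q * T).PosSemidef := hQ.conjTranspose_mul_mul_same T
  rw [hTH] at hconj
  have : (P * Q).trace = (T * Q * T).trace := by
    rw [← hTT, Matrix.mul_assoc, Matrix.trace_mul_comm]
  rw [this]
  exact aux_trace_nonneg hconj

/-- Rayleigh-quotient bound from `lambdaMax`. -/
lemma aux_rayleigh {n : ℕ} {R : Matrix (Fin n) (Fin n) ℝ} {L : ℝ} (hL : 0 ≤ L)
    (h : lambdaMax R ≤ L) (x : Fin n → ℝ) :
    x ⬝ᵥ R.mulVec x ≤ L * ∑ i, x i ^ 2 := by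
  rcases eq_or_ne x 0 with rfl | hx
  · simp
  · have hs : 0 < ∑ i, x i ^ 2 := by
      obtain ⟨i, hi⟩ := Function.ne_iff.mp hx
      refine Finset.sum_pos' (fun j _ => sq_nonneg _) ⟨i, Finset.mem_univ _, ?_⟩
      have h := pow_pos (abs_pos.mpr hi) 2
      rwa [sq_abs] at h
    set s : ℝ := ∑ i, x i ^ 2 with hsdef
    have hss : 0 < Real.sqrt s := Real.sqrt_pos.mpr hs
    set u : Fin n → ℝ := (Real.sqrt s)⁻¹ • x with hudef
    have hsu : ∑ i, u i ^ 2 = 1 := by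
      simp only [hudef, Pi.smul_apply, smul_eq_mul, mul_pow, ← Finset.mul_sum]
      rw [inv_pow, Real.sq_sqrt hs.le, ← hsdef, inv_mul_cancel₀ hs.ne']
    have hbdd : BddAbove {r : ℝ | ∃ y : Fin n → ℝ, (∑ i, y i ^ 2) = 1 ∧ r = y ⬝ᵥ R.mulVec y} := by
      refine ⟨∑ i, ∑ j, |R i j|, ?_⟩
      rintro r ⟨y, hy, rfl⟩
      have hyi : ∀ i, |y i| ≤ 1 := by
        intro i
        rw [← abs_one]
        apply abs_le_abs
        · nlinarith [Finset.single_le_sum (f := fun j => y j ^ 2)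
            (fun j _ => sq_nonneg (y j)) (Finset.mem_univ i), sq_nonneg (y i - 1)]
        · nlinarith [Finset.single_le_sum (f := fun j => y j ^ 2)
            (fun j _ => sq_nonneg (y j)) (Finset.mem_univ i), sq_nonneg (y i + 1)]
      have hexp : y ⬝ᵥ R.mulVec y = ∑ i, ∑ j, y i * (R i j * y j) := by
        simp [dotProduct, Matrix.mulVec, Finset.mul_sum]
      rw [hexp]
      refine Finset.sum_le_sum fun i _ => Finset.sum_le_sum fun j _ => ?_
      calc y i * (R i j * y j) ≤ |y i * (R i j * y j)| := le_abs_self _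
        _ = |y i| * |R i j| * |y j| := by rw [abs_mul, abs_mul]; ring
        _ ≤ 1 * |R i j| * 1 :=
            mul_le_mul (mul_le_mul (hyi i) le_rfl (abs_nonneg _) zero_le_one) (hyi j)
              (abs_nonneg _) (by positivity)
        _ = |R i j| := by ring
    have hmem : u ⬝ᵥ R.mulVec u ∈
        {r : ℝ | ∃ y : Fin n → ℝ, (∑ i, y i ^ 2) = 1 ∧ r = y ⬝ᵥ R.mulVec y} := ⟨u, hsu, rfl⟩
    have hle : u ⬝ᵥ R.mulVec u ≤ L := le_trans (le_csSup hbdd hmem) h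
    have hquad : u ⬝ᵥ R.mulVec u = s⁻¹ * (x ⬝ᵥ R.mulVec x) := by
      have hc : (Real.sqrt s)⁻¹ * (Real.sqrt s)⁻¹ = s⁻¹ := by
        rw [← mul_inv, Real.mul_self_sqrt hs.le]
      simp only [hudef, Matrix.mulVec_smul, dotProduct_smul, smul_dotProduct,
        smul_eq_mul]
      rw [← mul_assoc, hc]
    rw [hquad] at hle
    calc x ⬝ᵥ R.mulVec x = s * (s⁻¹ * (x ⬝ᵥ R.mulVec x)) := by
          field_simp
      _ ≤ s * L := by
          exact mul_le_mul_of_nonneg_left hle hs.le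
      _ = L * s := by ring

/-- `L • 1 - R` is positive semidefinite when `lambdaMax R ≤ L`. -/
lemma aux_smul_one_sub_posSemidef {n : ℕ} {R : Matrix (Fin n) (Fin n) ℝ} {L : ℝ} (hL : 0 ≤ L)
    (hR : R.IsHermitian) (h : lambdaMax R ≤ L) : (L • (1 : Matrix (Fin n) (Fin n) ℝ) - R).PosSemidef := by
  refine Matrix.PosSemidef.of_dotProduct_mulVec_nonneg ?_ ?_
  · have h1 : (L • (1 : Matrix (Fin n) (Fin n) ℝ)).IsHermitian := by
      unfold Matrix.IsHermitian
      simp [Matrix.conjTranspose_smul]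
    exact h1.sub hR
  · intro x
    have hray := aux_rayleigh hL h x
    have hdp : x ⬝ᵥ x = ∑ i, x i ^ 2 := by
      simp [dotProduct, sq]
    simp only [star_trivial, Matrix.sub_mulVec, Matrix.smul_mulVec, Matrix.one_mulVec,
      dotProduct_sub, dotProduct_smul, smul_eq_mul]
    rw [hdp] at *
    linarith

/-- trace comparison: if `L•1 - R ⪰ 0` and `P ⪰ 0` then `tr(P R) ≤ L tr(P)`. -/
lemma aux_trace_le {n : ℕ} {P R : Matrix (Fin n) (Fin n) ℝ} {L : ℝ}
    (hP : P.PosSemidef) (hLR : (L • (1 : Matrix (Fin n) (Fin n) ℝ) - R).PosSemidef) :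
    (P * R).trace ≤ L * P.trace := by
  have h := aux_trace_mul_nonneg hP hLR
  have hexp : (P * (L • (1 : Matrix (Fin n) (Fin n) ℝ) - R)).trace
      = L * P.trace - (P * R).trace := by
    rw [Matrix.mul_sub, Matrix.trace_sub, Matrix.mul_smul, Matrix.mul_one, Matrix.trace_smul,
      smul_eq_mul]
  linarith [hexp ▸ h]

/-- Trace and trace of square of a hermitian real matrix in terms of eigenvalues. -/
lemma aux_trace_eig {n : ℕ} {A : Matrix (Fin n) (Fin n) ℝ} (hA : A.IsHermitian) :
    A.trace = ∑ i, hA.eigenvalues i ∧ (A * A).trace = ∑ i, hA.eigenvalues i ^ 2 := by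
  set U : Matrix (Fin n) (Fin n) ℝ := (hA.eigenvectorUnitary : Matrix (Fin n) (Fin n) ℝ) with hUdef
  set D : Matrix (Fin n) (Fin n) ℝ := Matrix.diagonal (RCLike.ofReal ∘ hA.eigenvalues) with hDdef
  have hU : star U * U = 1 := Matrix.mem_unitaryGroup_iff'.mp hA.eigenvectorUnitary.2
  have hspec : A = U * D * star U := hA.spectral_theorem
  constructor
  · conv_lhs => rw [hspec]
    rw [Matrix.trace_mul_cycle, hU, Matrix.one_mul, hDdef, Matrix.trace_diagonal]
    simp
  · have hAA : A * A = U * (D * D) * star U := by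
      rw [hspec]
      simp only [Matrix.mul_assoc]
      rw [← Matrix.mul_assoc (star U) U, hU, Matrix.one_mul]
    rw [hAA, Matrix.trace_mul_cycle, hU, Matrix.one_mul, hDdef,
      Matrix.diagonal_mul_diagonal, Matrix.trace_diagonal]
    simp [sq]

theorem kl_divergence_lower_bound
    (a b : ℝ) (ha : 0 < a) (hab : a ≤ b) (L : ℝ) (hL : 0 < L) :
    ∃ c > (0 : ℝ), ∀ n : ℕ, 1 ≤ n → ∀ R S : Matrix (Fin n) (Fin n) ℝ,
      R.PosDef → S.PosDef → lambdaMax R ≤ L →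
      (∀ μ ∈ spectrum ℝ (R⁻¹ * S), μ ∈ Set.Icc a b) →
      (c / L ^ 2) * frobNormN n (R - S) ^ 2
        ≤ (1 / (n : ℝ)) * (Matrix.trace (R⁻¹ * S) - Real.log (R⁻¹ * S).det - n) := by
  refine ⟨((1 + Real.sqrt b) ^ 2)⁻¹, by positivity, ?_⟩
  intro n hn R S hR hS hLmax hspec
  set c₀ : ℝ := ((1 + Real.sqrt b) ^ 2)⁻¹ with hc₀def
  have hc₀ : 0 < c₀ := by positivity
  have hnpos : (0 : ℝ) < n := by exact_mod_cast hn
  -- square root of R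
  set T : Matrix (Fin n) (Fin n) ℝ := aux_msqrt R with hTdef
  have hTH : Tᴴ = T := aux_msqrt_herm R
  have hTT : T * T = R := aux_msqrt_mul_self hR.posSemidef
  have hdetR : 0 < R.det := hR.det_pos
  have hdetT : T.det ≠ 0 := by
    intro h0
    rw [← hTT, Matrix.det_mul, h0, mul_zero] at hdetR
    exact lt_irrefl _ hdetR
  have hdTu : IsUnit T.det := isUnit_iff_ne_zero.mpr hdetT
  have hTinv : T⁻¹ * T = 1 := Matrix.nonsing_inv_mul T hdTu
  have hTinv' : T * T⁻¹ = 1 := Matrix.mul_nonsing_inv T hdTu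
  have hTiH : T⁻¹ᴴ = T⁻¹ := by rw [Matrix.conjTranspose_nonsing_inv, hTH]
  -- the symmetrized matrix A
  set A : Matrix (Fin n) (Fin n) ℝ := T⁻¹ * S * T⁻¹ with hAdef
  have hAps : A.PosSemidef := by
    have := hS.posSemidef.conjTranspose_mul_mul_same (B := T⁻¹)
    rwa [hTiH] at this
  have hAH : A.IsHermitian := hAps.isHermitian
  -- conjugation identity
  have hRinv : R⁻¹ = T⁻¹ * T⁻¹ := by rw [← hTT, Matrix.mul_inv_rev]
  have hconj : R⁻¹ * S = T⁻¹ * A * T := by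
    rw [hRinv, hAdef]
    calc T⁻¹ * T⁻¹ * S = T⁻¹ * T⁻¹ * S * 1 := by rw [Matrix.mul_one]
      _ = T⁻¹ * T⁻¹ * S * (T⁻¹ * T) := by rw [hTinv]
      _ = T⁻¹ * (T⁻¹ * S * T⁻¹) * T := by
          simp only [Matrix.mul_assoc]
  -- spectrum identification
  have hspecEq : spectrum ℝ (R⁻¹ * S) = spectrum ℝ A := by
    have hTu : IsUnit T := (Matrix.isUnit_iff_isUnit_det T).mpr hdTu
    have hcu : (↑hTu.unit⁻¹ : Matrix (Fin n) (Fin n) ℝ) = T⁻¹ := by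
      rw [Matrix.coe_units_inv, hTu.unit_spec]
    have hckey := spectrum.units_conjugate' (R := ℝ) (a := A) (u := hTu.unit)
    rwa [Matrix.coe_units_inv, hTu.unit_spec, ← hconj] at hckey
  -- eigenvalues of A
  set μ : Fin n → ℝ := hAH.eigenvalues with hμdef
  have hμmem : ∀ i, μ i ∈ Set.Icc a b := by
    intro i
    apply hspec
    rw [hspecEq]
    exact hAH.eigenvalues_mem_spectrum_real i
  have hμpos : ∀ i, 0 < μ i := fun i => lt_of_lt_of_le ha (hμmem i).1
  -- trace and determinant identities
  have htrace : (R⁻¹ * S).trace = A.trace := by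
    rw [hconj, Matrix.trace_mul_cycle, ← Matrix.mul_assoc, hTinv', Matrix.one_mul]
  have hdet : (R⁻¹ * S).det = A.det := by
    have hdetTi : T⁻¹.det = T.det⁻¹ := by
      rw [Matrix.det_nonsing_inv, Ring.inverse_eq_inv']
    rw [hconj, hAdef]
    simp only [Matrix.det_mul, hdetTi]
    field_simp
  have htrA : A.trace = ∑ i, μ i := (aux_trace_eig hAH).1
  have htrAA : (A * A).trace = ∑ i, μ i ^ 2 := (aux_trace_eig hAH).2
  have hdetA : A.det = ∏ i, μ i := by
    have := hAH.det_eq_prod_eigenvalues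
    simpa using this
  have hlogdet : Real.log A.det = ∑ i, Real.log (μ i) := by
    rw [hdetA, Real.log_prod]
    exact fun i _ => (hμpos i).ne'
  -- B := 1 - A
  set B : Matrix (Fin n) (Fin n) ℝ := 1 - A with hBdef
  have hBH : Bᴴ = B := by
    rw [hBdef, Matrix.conjTranspose_sub, hAH.eq, Matrix.conjTranspose_one]
  -- R - S = T * B * T
  have hmid : T * A * T = S := by
    rw [hAdef]
    calc T * (T⁻¹ * S * T⁻¹) * T = T * T⁻¹ * S * (T⁻¹ * T) := by
          simp only [Matrix.mul_assoc]
      _ = S := by rw [hTinv, hTinv', Matrix.one_mul, Matrix.mul_one]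
  have hRS : R - S = T * B * T := by
    rw [hBdef, Matrix.mul_sub, Matrix.sub_mul, Matrix.mul_one, hTT, hmid]
  -- Frobenius norm squared as a trace
  have hfrobTr : ∑ i, ∑ j, (R - S) i j ^ 2 = ((R - S) * (R - S)).trace := by
    have hsym : ∀ i j, (R - S) j i = (R - S) i j := by
      intro i j
      have h := congr_fun (congr_fun (hR.isHermitian.sub hS.isHermitian).eq i) j
      simpa [Matrix.conjTranspose_apply] using h
    rw [Matrix.trace]
    refine Finset.sum_congr rfl fun i _ => ?_
    simp only [Matrix.diag_apply, Matrix.mul_apply]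
    refine Finset.sum_congr rfl fun j _ => ?_
    rw [hsym i j, sq]
  -- the operator norm bound
  have hLRps : (L • (1 : Matrix (Fin n) (Fin n) ℝ) - R).PosSemidef :=
    aux_smul_one_sub_posSemidef hL.le hR.isHermitian hLmax
  have hBRB : (B * R * B).PosSemidef := by
    have := hR.posSemidef.conjTranspose_mul_mul_same (B := B)
    rwa [hBH] at this
  have hBB : (B * B).PosSemidef := by
    have := Matrix.posSemidef_conjTranspose_mul_self B
    rwa [hBH] at this
  have step1 : ((R - S) * (R - S)).trace = ((B * R * B) * R).trace := by
    have e1 : (R - S) * (R - S) = T * ((B * R * B) * T) := by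
      rw [hRS]
      calc T * B * T * (T * B * T) = T * (B * (T * T) * B * T) := by
            simp only [Matrix.mul_assoc]
        _ = T * ((B * R * B) * T) := by rw [hTT]
    rw [e1, Matrix.trace_mul_comm, Matrix.mul_assoc (B * R * B) T T, hTT]
  have step2 : ((B * R * B) * R).trace ≤ L * (B * R * B).trace :=
    aux_trace_le hBRB hLRps
  have step3 : (B * R * B).trace = ((B * B) * R).trace := by
    rw [Matrix.trace_mul_cycle]
  have step4 : ((B * B) * R).trace ≤ L * (B * B).trace :=
    aux_trace_le hBB hLRps
  have hBRBnn : 0 ≤ (B * R * B).trace := aux_trace_nonneg hBRB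
  have hfull : ((R - S) * (R - S)).trace ≤ L ^ 2 * (B * B).trace := by
    have h5 : L * ((B * B) * R).trace ≤ L * (L * (B * B).trace) :=
      mul_le_mul_of_nonneg_left step4 hL.le
    calc ((R - S) * (R - S)).trace ≤ L * (B * R * B).trace := step1 ▸ step2
      _ = L * ((B * B) * R).trace := by rw [step3]
      _ ≤ L * (L * (B * B).trace) := h5
      _ = L ^ 2 * (B * B).trace := by ring
  -- trace of B² in terms of eigenvalues
  have htrBB : (B * B).trace = ∑ i, (μ i - 1) ^ 2 := by
    have hexp : B * B = 1 - A - A + A * A := by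
      rw [hBdef]; noncomm_ring
    have hsum : ∑ i, (μ i - 1) ^ 2 = (∑ i, μ i ^ 2) - 2 * ∑ i, μ i + n := by
      have h1 : ∀ i ∈ Finset.univ, (μ i - 1) ^ 2 = μ i ^ 2 - 2 * μ i + 1 :=
        fun i _ => by ring
      rw [Finset.sum_congr rfl h1]
      simp only [Finset.sum_add_distrib, Finset.sum_sub_distrib, Finset.sum_const,
        Finset.card_univ, Fintype.card_fin, nsmul_eq_mul, mul_one, Finset.mul_sum]
    rw [hexp, Matrix.trace_add, Matrix.trace_sub, Matrix.trace_sub, Matrix.trace_one,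
      htrA, htrAA, Fintype.card_fin, hsum]
    ring
  -- scalar inequality applied to eigenvalues
  have hscal : ∀ i, c₀ * (μ i - 1) ^ 2 ≤ μ i - Real.log (μ i) - 1 := by
    intro i
    have h := aux_scalar_ineq (hμpos i) (hμmem i).2
    have heq : c₀ * (μ i - 1) ^ 2 = (μ i - 1) ^ 2 / (1 + Real.sqrt b) ^ 2 := by
      rw [hc₀def, inv_mul_eq_div]
    linarith [heq ▸ h]
  have hE_F : c₀ * ∑ i, (μ i - 1) ^ 2 ≤ (∑ i, μ i) - (∑ i, Real.log (μ i)) - n := by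
    rw [Finset.mul_sum]
    calc ∑ i, c₀ * (μ i - 1) ^ 2 ≤ ∑ i, (μ i - Real.log (μ i) - 1) :=
          Finset.sum_le_sum fun i _ => hscal i
      _ = (∑ i, μ i) - (∑ i, Real.log (μ i)) - n := by
          rw [Finset.sum_sub_distrib, Finset.sum_sub_distrib, Finset.sum_const,
            Finset.card_univ, Fintype.card_fin, nsmul_eq_mul, mul_one]
  -- assemble
  have hfrob : frobNormN n (R - S) ^ 2 = (1 / (n : ℝ)) * ∑ i, ∑ j, (R - S) i j ^ 2 := by
    have hnn' : 0 ≤ (1 / (n : ℝ)) * ∑ i, ∑ j, (R - S) i j ^ 2 :=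
      mul_nonneg (by positivity)
        (Finset.sum_nonneg fun i _ => Finset.sum_nonneg fun j _ => sq_nonneg _)
    rw [frobNormN, Real.sq_sqrt hnn']
  have hSqE : ∑ i, ∑ j, (R - S) i j ^ 2 ≤ L ^ 2 * ∑ i, (μ i - 1) ^ 2 := by
    rw [hfrobTr, ← htrBB]
    exact hfull
  have hRHS : Matrix.trace (R⁻¹ * S) - Real.log (R⁻¹ * S).det - n
      = (∑ i, μ i) - (∑ i, Real.log (μ i)) - n := by
    rw [htrace, hdet, htrA, hlogdet]
  rw [hfrob, hRHS]
  calc (c₀ / L ^ 2) * ((1 / (n : ℝ)) * ∑ i, ∑ j, (R - S) i j ^ 2)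
      ≤ (c₀ / L ^ 2) * ((1 / (n : ℝ)) * (L ^ 2 * ∑ i, (μ i - 1) ^ 2)) := by
        apply mul_le_mul_of_nonneg_left _ (by positivity)
        exact mul_le_mul_of_nonneg_left hSqE (by positivity)
    _ = (1 / (n : ℝ)) * (c₀ * ∑ i, (μ i - 1) ^ 2) := by
        field_simp
    _ ≤ (1 / (n : ℝ)) * ((∑ i, μ i) - (∑ i, Real.log (μ i)) - n) :=
        mul_le_mul_of_nonneg_left hE_F (by positivity)
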